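/- Let G be a finite group with cyclic Sylow p-subgroup of order q ≥ 4, k a field of characteristic p, ζ ∈ Ĥ^n(G,k) nonzero with n odd, and L_ζ = ker(ζ: Ω^n k → k). Then L_ζ is not stably isomorphic to Ω^m k for any integer m, because the dimension of L_ζ is not congruent to ±1 modulo q. -/

import Mathlib

open CategoryTheory

namespace StmodGH

/-- The trivial `kG`-module `k`, as a module over the group algebra. -/
noncomputable def triv (k G : Type) [Field k] [Group G] : ModuleCat (MonoidAlgebra k G) :=
  ModuleCat.of _ (Representation.trivial k (G := G) (V := k)).asModule

variable {A : Type} [Ring A]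

/-- A map is zero in the stable module category iff it factors through a projective. -/
def StablyZero {M N : ModuleCat A} (f : M ⟶ N) : Prop :=
  ∃ P : ModuleCat A, Projective P ∧ ∃ (g : M ⟶ P) (h : P ⟶ N), f = g ≫ h

/-- Two modules are isomorphic in the stable module category. -/
def StablyIso (M N : ModuleCat A) : Prop :=
  ∃ (f : M ⟶ N) (g : N ⟶ M), StablyZero (f ≫ g - 𝟙 M) ∧ StablyZero (g ≫ f - 𝟙 N)

/-- A short exact sequence `0 → X → Y → Z → 0` of modules. -/
structure SES (X Y Z : ModuleCat A) where
  i : X ⟶ Y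
  p : Y ⟶ Z
  inj : Function.Injective i
  surj : Function.Surjective p
  exact : ∀ y : Y, p y = 0 ↔ ∃ x, i x = y

/-- `Ω` is a family of syzygies/cosyzygies of `M`: `Ω 0 ≃ M` stably, and each
`Ω (i+1)` is the kernel of a surjection from a (finitely generated) projective onto `Ω i`. -/
def IsSyzygyFamily (M : ModuleCat A) (Ω : ℤ → ModuleCat A) : Prop :=
  (∀ i, Module.Finite A (Ω i)) ∧ StablyIso (Ω 0) M ∧
    ∀ i : ℤ, ∃ P : ModuleCat A, Projective P ∧ Nonempty (SES (Ω (i + 1)) P (Ω i))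

/-- Indecomposability, via idempotent endomorphisms. -/
def Indecomp (M : ModuleCat A) : Prop :=
  ¬ Limits.IsZero M ∧ ∀ f : M ⟶ M, f ≫ f = f → f = 0 ∨ f = 𝟙 M

/-- Membership in the thick subcategory of the stable module category generated by `G₀`:
the smallest class containing `G₀`, containing the (stably trivial) projective modules,
closed under stable isomorphism, under exact triangles (equivalently, two-out-of-three for
short exact sequences), and under direct summands. -/
inductive InThick (G₀ : ModuleCat A) : ModuleCat A → Prop
  | gen : InThick G₀ G₀
  | proj (P : ModuleCat A) : Projective P → InThick G₀ P
  | iso {M N : ModuleCat A} : StablyIso M N → InThick G₀ M → InThick G₀ N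
  | ext₁ {X Y Z : ModuleCat A} : SES X Y Z → InThick G₀ X → InThick G₀ Y → InThick G₀ Z
  | ext₂ {X Y Z : ModuleCat A} : SES X Y Z → InThick G₀ X → InThick G₀ Z → InThick G₀ Y
  | ext₃ {X Y Z : ModuleCat A} : SES X Y Z → InThick G₀ Y → InThick G₀ Z → InThick G₀ X
  | summand {M N : ModuleCat A} : (∃ (s : M ⟶ N) (r : N ⟶ M), s ≫ r = 𝟙 M) →
      InThick G₀ N → InThick G₀ M

/-- A short exact sequence `0 → X → B → N → 0` is almost split: it is non-split, has
indecomposable end terms, and every map to `N` that is not a split epimorphism factors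
through the middle term `B`. -/
def IsAlmostSplit {X B N : ModuleCat A} (s : SES X B N) : Prop :=
  Indecomp X ∧ Indecomp N ∧ (¬ ∃ sec : N ⟶ B, sec ≫ s.p = 𝟙 N) ∧
    ∀ (M : ModuleCat A) (f : M ⟶ N),
      (¬ ∃ sec : N ⟶ M, sec ≫ f = 𝟙 N) → ∃ g : M ⟶ B, g ≫ s.p = f

/-- The generating hypothesis for `kG`: every map in the thick subcategory generated by the
trivial module which induces the zero map on Tate cohomology
`Ĥ^i(G,−) = Hom_stmod(Ω^i k, −)` is zero in the stable module category. -/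
def GHolds (k G : Type) [Field k] [Group G] [Fintype G] : Prop :=
  ∀ Ωk : ℤ → ModuleCat (MonoidAlgebra k G), IsSyzygyFamily (triv k G) Ωk →
    ∀ M N : ModuleCat (MonoidAlgebra k G), InThick (triv k G) M → InThick (triv k G) N →
      ∀ f : M ⟶ N, (∀ (i : ℤ) (g : Ωk i ⟶ M), StablyZero (g ≫ f)) → StablyZero f


open MonoidAlgebra Finsupp

section Free

variable {k : Type} [Field k] {G : Type} [Group G]

/-- The algebra map `k[H] → k[G]` for a subgroup `H ≤ G`. -/
noncomputable def φA (H : Subgroup G) : MonoidAlgebra k ↥H →ₐ[k] MonoidAlgebra k G :=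
  MonoidAlgebra.mapDomainAlgHom k k H.subtype

lemma φA_single (H : Subgroup G) (h : ↥H) (c : k) :
    φA H (MonoidAlgebra.single h c) = MonoidAlgebra.single (↑h : G) c := by
  show MonoidAlgebra.mapDomain _ _ = _
  simp [MonoidAlgebra.mapDomain_single]

/-- Restriction of scalars along `φA`. -/
noncomputable def resModule (H : Subgroup G) (M : Type) [AddCommGroup M]
    [Module (MonoidAlgebra k G) M] : Module (MonoidAlgebra k ↥H) M :=
  Module.compHom M (φA (k := k) H).toRingHom

lemma resModule_smul_def (H : Subgroup G) (M : Type) [AddCommGroup M]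
    [Module (MonoidAlgebra k G) M] (r : MonoidAlgebra k ↥H) (m : M) :
    letI := resModule (k := k) H M
    r • m = φA H r • m := rfl

/-- Decomposition of `G` into right cosets of `H`. -/
noncomputable def cosetEquiv (H : Subgroup G) :
    G ≃ (Quotient (QuotientGroup.rightRel H)) × ↥H where
  toFun g := (Quotient.mk _ g,
    ⟨g * (Quotient.out (Quotient.mk (QuotientGroup.rightRel H) g))⁻¹, by
      have h1 : Quotient.mk (QuotientGroup.rightRel H)
          (Quotient.out (Quotient.mk (QuotientGroup.rightRel H) g)) =
          Quotient.mk (QuotientGroup.rightRel H) g := Quotient.out_eq _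
      exact QuotientGroup.rightRel_apply.mp (Quotient.exact h1)⟩)
  invFun th := ↑th.2 * Quotient.out th.1
  left_inv g := by simp
  right_inv := by
    rintro ⟨t, h⟩
    have key : Quotient.mk (QuotientGroup.rightRel H) (↑h * Quotient.out t) = t := by
      have : Quotient.mk (QuotientGroup.rightRel H) (↑h * Quotient.out t) =
          Quotient.mk (QuotientGroup.rightRel H) (Quotient.out t) :=
        Quotient.sound (QuotientGroup.rightRel_apply.mpr (by simp [mul_assoc]))
      rw [this, Quotient.out_eq]
    ext
    · simp [key]
    · simp [key]

lemma cosetEquiv_mul (H : Subgroup G) (h : ↥H) (g : G) :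
    cosetEquiv H (↑h * g) = ((cosetEquiv H g).1, h * (cosetEquiv H g).2) := by
  have key : Quotient.mk (QuotientGroup.rightRel H) (↑h * g) =
      Quotient.mk (QuotientGroup.rightRel H) g :=
    Quotient.sound (QuotientGroup.rightRel_apply.mpr (by simp [mul_assoc]))
  refine Prod.ext key ?_
  apply Subtype.ext
  show (↑h * g) * (Quotient.out (Quotient.mk (QuotientGroup.rightRel H) (↑h * g)))⁻¹ = _
  rw [key]
  simp [mul_assoc]
  rfl

/-- The `k`-linear equivalence `k[G] ≃ (H\G →₀ k[H])`. -/
noncomputable def freeEquiv (H : Subgroup G) :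
    MonoidAlgebra k G ≃ₗ[k] ((Quotient (QuotientGroup.rightRel H)) →₀ MonoidAlgebra k ↥H) :=
  (MonoidAlgebra.coeffLinearEquiv k).trans ((Finsupp.domLCongr (cosetEquiv H)).trans
    ((Finsupp.finsuppProdLEquiv k).trans
      (Finsupp.mapRange.linearEquiv (MonoidAlgebra.coeffLinearEquiv k).symm)))

lemma freeEquiv_single (H : Subgroup G) (g : G) (c : k) :
    freeEquiv (k := k) H (MonoidAlgebra.single g c) =
      Finsupp.single (cosetEquiv H g).1 (MonoidAlgebra.single (cosetEquiv H g).2 c) := by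
  classical
  simp [freeEquiv, Finsupp.finsuppProdLEquiv]

/-- The `k[H]`-linear equivalence `k[G] ≃ (H\G →₀ k[H])`. -/
noncomputable def freeREquiv (H : Subgroup G) :
    letI := resModule (k := k) H (MonoidAlgebra k G)
    MonoidAlgebra k G ≃ₗ[MonoidAlgebra k ↥H]
      ((Quotient (QuotientGroup.rightRel H)) →₀ MonoidAlgebra k ↥H) :=
  letI := resModule (k := k) H (MonoidAlgebra k G)
  { freeEquiv (k := k) H with
    map_smul' := by
      intro r a
      show freeEquiv (k := k) H (r • a) = r • freeEquiv (k := k) H a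
      have hR : ∀ (r x : MonoidAlgebra k ↥H) (t : Quotient (QuotientGroup.rightRel H)),
          r • (Finsupp.single t x : _ →₀ MonoidAlgebra k ↥H) = Finsupp.single t (r * x) :=
        fun r x t => by rw [Finsupp.smul_single, smul_eq_mul]
      induction a using MonoidAlgebra.induction_linear with
      | zero => simp
      | add x y hx hy => rw [smul_add, map_add, hx, hy, map_add, smul_add]
      | single g c =>
        induction r using MonoidAlgebra.induction_linear with
        | zero => rw [zero_smul, zero_smul, map_zero]
        | add x y hx hy => rw [add_smul, map_add, hx, hy, add_smul]
        | single h d =>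
          rw [resModule_smul_def, φA_single]
          show freeEquiv (k := k) H
              ((MonoidAlgebra.single (↑h : G) d) * (MonoidAlgebra.single g c)) = _
          rw [MonoidAlgebra.single_mul_single]
          rw [freeEquiv_single, freeEquiv_single, cosetEquiv_mul, hR]
          congr 1
          show MonoidAlgebra.single (h * (cosetEquiv H g).2) (d * c) =
            (MonoidAlgebra.single h d) * (MonoidAlgebra.single (cosetEquiv H g).2 c)
          rw [MonoidAlgebra.single_mul_single] }

lemma free_over_subgroup (H : Subgroup G) :
    letI := resModule (k := k) H (MonoidAlgebra k G)
    Module.Free (MonoidAlgebra k ↥H) (MonoidAlgebra k G) :=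
  letI := resModule (k := k) H (MonoidAlgebra k G)
  Module.Free.of_equiv (freeREquiv (k := k) H).symm

end Free


section Local

variable {k : Type} [Field k] {p : ℕ} [Fact p.Prime] [CharP k p]
variable {H' : Type} [CommGroup H'] [Fintype H']

/-- The augmentation map. -/
noncomputable def aug (k H' : Type) [Field k] [CommGroup H'] : MonoidAlgebra k H' →ₐ[k] k :=
  MonoidAlgebra.lift k k H' 1

lemma aug_single (h : H') (c : k) : aug k H' (MonoidAlgebra.single h c) = c := by
  rw [aug]
  rw [MonoidAlgebra.lift_single]
  simp

lemma aug_apply (x : MonoidAlgebra k H') : aug k H' x = ∑ h ∈ x.coeff.support, x.coeff h := by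
  conv_lhs => rw [← MonoidAlgebra.sum_coeff_single x]
  rw [Finsupp.sum]
  rw [map_sum]
  exact Finset.sum_congr rfl fun h _ => aug_single h (x.coeff h)

lemma nilpotent_of_aug_eq_zero {s : ℕ} (hcard : Fintype.card H' = p ^ s)
    (x : MonoidAlgebra k H') (hx : aug k H' x = 0) : IsNilpotent x := by
  haveI : CharP (MonoidAlgebra k H') p :=
    charP_of_injective_algebraMap (algebraMap k (MonoidAlgebra k H')).injective p
  have hsum : ∑ h ∈ x.coeff.support, x.coeff h = 0 := by rw [← aug_apply, hx]
  have hxeq : x = ∑ h ∈ x.coeff.support, (x.coeff h) • ((MonoidAlgebra.single h (1:k)) - 1) := by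
    have h1 : ∑ h ∈ x.coeff.support, (x.coeff h) • ((MonoidAlgebra.single h (1:k)) - 1) =
        (∑ h ∈ x.coeff.support, (x.coeff h) • (MonoidAlgebra.single h (1:k))) -
          (∑ h ∈ x.coeff.support, x.coeff h) • (1 : MonoidAlgebra k H') := by
      rw [Finset.sum_smul, ← Finset.sum_sub_distrib]
      exact Finset.sum_congr rfl fun h _ => smul_sub _ _ _
    rw [h1, hsum, zero_smul, sub_zero]
    conv_lhs => rw [← MonoidAlgebra.sum_coeff_single x]
    rw [Finsupp.sum]
    exact Finset.sum_congr rfl fun h _ => by rw [MonoidAlgebra.smul_single, smul_eq_mul, mul_one]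
  rw [hxeq]
  apply isNilpotent_sum
  intro h _
  apply IsNilpotent.smul
  refine ⟨p ^ s, ?_⟩
  rw [sub_pow_char_pow, one_pow, MonoidAlgebra.single_pow, one_pow, ← hcard,
    pow_card_eq_one, MonoidAlgebra.one_def, sub_self]

lemma isLocalRing_monoidAlgebra {s : ℕ} (hcard : Fintype.card H' = p ^ s) :
    IsLocalRing (MonoidAlgebra k H') := by
  apply IsLocalRing.of_isUnit_or_isUnit_one_sub_self
  intro a
  by_cases h : aug k H' a = 0
  · right
    have : IsNilpotent a := nilpotent_of_aug_eq_zero hcard a h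
    simpa using this.isUnit_one_sub
  · left
    have hn : IsNilpotent (a - algebraMap k (MonoidAlgebra k H') (aug k H' a)) := by
      apply nilpotent_of_aug_eq_zero hcard
      rw [map_sub, AlgHom.commutes]
      simp
    have hu : IsUnit (algebraMap k (MonoidAlgebra k H') (aug k H' a)) :=
      (Ne.isUnit h).map (algebraMap k (MonoidAlgebra k H'))
    have : a = algebraMap k (MonoidAlgebra k H') (aug k H' a) +
        (a - algebraMap k (MonoidAlgebra k H') (aug k H' a)) := by ring
    rw [this]
    exact IsNilpotent.isUnit_add_left_of_commute hn hu (Commute.all _ _)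

end Local


section Dvd

variable {k G : Type} [Field k] [Group G] [Fintype G]

lemma finite_k_monoidAlgebra : Module.Finite k (MonoidAlgebra k G) :=
  Module.Finite.of_basis (MonoidAlgebra.basis G k : Module.Basis G k (MonoidAlgebra k G))

lemma q_dvd_finrank {p : ℕ} [Fact p.Prime] [CharP k p] (P : Sylow p G)
    (hcyc : IsCyclic ↥(P : Subgroup G))
    (M : Type) [AddCommGroup M] [Module (MonoidAlgebra k G) M]
    [Module.Finite (MonoidAlgebra k G) M] (hproj : Module.Projective (MonoidAlgebra k G) M) :
    Nat.card ↥(P : Subgroup G) ∣ Module.finrank k (RestrictScalars k (MonoidAlgebra k G) M) := by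
  classical
  set H : Subgroup G := ↑P with hH
  haveI : IsCyclic ↥H := hcyc
  letI : CommGroup ↥H := IsCyclic.commGroup
  set M' := RestrictScalars k (MonoidAlgebra k G) M with hM'
  letI : AddCommMonoid M' := AddCommGroup.toAddCommMonoid
  letI : Module k M' := RestrictScalars.module k (MonoidAlgebra k G) M
  letI : Module (MonoidAlgebra k G) M' := RestrictScalars.moduleOrig k (MonoidAlgebra k G) M
  letI : IsScalarTower k (MonoidAlgebra k G) M' :=
    RestrictScalars.isScalarTower k (MonoidAlgebra k G) M
  haveI hfinA : Module.Finite k (MonoidAlgebra k G) := finite_k_monoidAlgebra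
  haveI : Module.Finite (MonoidAlgebra k G) M' := ‹Module.Finite (MonoidAlgebra k G) M›
  haveI hprojM' : Module.Projective (MonoidAlgebra k G) M' := hproj
  letI : Module (MonoidAlgebra k ↥H) (MonoidAlgebra k G) :=
    resModule (k := k) H (MonoidAlgebra k G)
  letI : Module (MonoidAlgebra k ↥H) M' := resModule (k := k) H M'
  letI : IsScalarTower (MonoidAlgebra k ↥H) (MonoidAlgebra k G) M' :=
    ⟨fun r a m => by
      exact mul_smul (φA (k := k) H r) a m⟩
  obtain ⟨n, f, g, -, -, hfg⟩ :=
    Module.Finite.exists_comp_eq_id_of_projective (MonoidAlgebra k G) M'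
  letI : IsScalarTower (MonoidAlgebra k ↥H) (MonoidAlgebra k G) (Fin n → MonoidAlgebra k G) :=
    ⟨fun r a v => funext fun i => by
      show (r • a) * v i = (r • (a • v)) i
      exact mul_assoc (φA (k := k) H r) a (v i)⟩
  haveI : Module.Free (MonoidAlgebra k ↥H) (MonoidAlgebra k G) := free_over_subgroup H
  haveI : Module.Projective (MonoidAlgebra k ↥H) M' :=
    Module.Projective.of_split (g.restrictScalars (MonoidAlgebra k ↥H))
      (f.restrictScalars (MonoidAlgebra k ↥H))
      (LinearMap.ext fun m => DFunLike.congr_fun hfg m)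
  obtain ⟨s, hs⟩ := (P.isPGroup').exists_card_eq
  have hcard : Fintype.card ↥H = p ^ s := by
    rw [← Nat.card_eq_fintype_card]; exact hs
  haveI : IsLocalRing (MonoidAlgebra k ↥H) := isLocalRing_monoidAlgebra hcard
  haveI : Module.Finite k M' := Module.Finite.trans (MonoidAlgebra k G) M'
  letI : IsScalarTower k (MonoidAlgebra k ↥H) M' :=
    ⟨fun c r m => by
      show (φA (k := k) H (c • r)) • m = c • ((φA (k := k) H r) • m)
      rw [map_smul, smul_assoc]⟩
  haveI : Module.Finite (MonoidAlgebra k ↥H) M' :=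
    Module.Finite.of_restrictScalars_finite k (MonoidAlgebra k ↥H) M'
  haveI : Module.FinitePresentation (MonoidAlgebra k ↥H) M' :=
    Module.finitePresentation_of_projective (MonoidAlgebra k ↥H) M'
  haveI : Module.Free (MonoidAlgebra k ↥H) M' := Module.free_of_flat_of_isLocalRing
  have htower := Module.finrank_mul_finrank k (MonoidAlgebra k ↥H) M'
  have hfr : Module.finrank k (MonoidAlgebra k ↥H) = Nat.card ↥H := by
    rw [show Module.finrank k (MonoidAlgebra k ↥H) = Fintype.card ↥H from
      Module.finrank_eq_card_basis (MonoidAlgebra.basis ↥H k : Module.Basis ↥H k (MonoidAlgebra k ↥H)),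
      Nat.card_eq_fintype_card]
  rw [hfr] at htower
  exact ⟨Module.finrank (MonoidAlgebra k ↥H) M', htower.symm⟩

end Dvd


/-- The `k`-module structure on `RestrictScalars k A M`, stated for the additive monoid
coming from the additive group. -/
noncomputable abbrev resModuleAG (k A M : Type) [CommSemiring k] [Ring A] [Algebra k A]
    [AddCommGroup M] [Module A M] :
    @Module k (RestrictScalars k A M) _ AddCommGroup.toAddCommMonoid :=
  RestrictScalars.module k A M

section Dims

attribute [local instance] resModuleAG

variable {k : Type} [Field k] [Algebra k A] [Module.Finite k A]

/-- `k`-dimension of an `A`-module. -/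
noncomputable def dimk (k : Type) [Field k] (A : Type) [Ring A] [Algebra k A] (M : Type)
    [AddCommGroup M] [Module A M] : ℕ :=
  Module.finrank k (RestrictScalars k A M)

variable {M N : Type} [AddCommGroup M] [AddCommGroup N] [Module A M] [Module A N]

/-- An `A`-linear map, as `k`-linear map between restrictions of scalars. -/
noncomputable def resk (f : M →ₗ[A] N) :
    RestrictScalars k A M →ₗ[k] RestrictScalars k A N where
  toFun := f
  map_add' := map_add f
  map_smul' c x := by
    rw [RingHom.id_apply]
    exact map_smul f (algebraMap k A c) (show M from x)

lemma resk_apply (f : M →ₗ[A] N) (x : M) : resk (k := k) f x = f x := rfl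

/-- An `A`-linear equiv gives a `k`-linear equiv of restrictions of scalars. -/
noncomputable def reskEquiv (e : M ≃ₗ[A] N) :
    RestrictScalars k A M ≃ₗ[k] RestrictScalars k A N :=
  LinearEquiv.ofLinear (resk e.toLinearMap) (resk e.symm.toLinearMap)
    (LinearMap.ext fun x => e.apply_symm_apply x)
    (LinearMap.ext fun x => e.symm_apply_apply x)

lemma finiteDimensional_resk (M : Type) [AddCommGroup M] [Module A M] [Module.Finite A M] :
    FiniteDimensional k (RestrictScalars k A M) := by
  letI : Module A (RestrictScalars k A M) := RestrictScalars.moduleOrig k A M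
  haveI : Module.Finite A (RestrictScalars k A M) := ‹Module.Finite A M›
  exact Module.Finite.trans A (RestrictScalars k A M)

lemma dimk_eq_of_equiv (e : M ≃ₗ[A] N) : dimk k A M = dimk k A N :=
  (reskEquiv (k := k) e).finrank_eq

lemma dimk_eq_of_surjective [Module.Finite A M] (f : M →ₗ[A] N) (hf : Function.Surjective f) :
    dimk k A M = dimk k A N + dimk k A ↥(LinearMap.ker f) := by
  haveI := finiteDimensional_resk (k := k) (A := A) M
  have h1 := LinearMap.finrank_range_add_finrank_ker (resk (k := k) f)
  have hrange : LinearMap.range (resk (k := k) f) = ⊤ := LinearMap.range_eq_top.mpr hf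
  erw [hrange] at h1
  erw [finrank_top] at h1
  -- identify the kernels
  have hker : Module.finrank k ↥(LinearMap.ker (resk (k := k) f)) =
      dimk k A ↥(LinearMap.ker f) := by
    refine (LinearEquiv.finrank_eq ?_).symm
    exact { toFun := fun x => ⟨x.1, x.2⟩
            invFun := fun x => ⟨x.1, x.2⟩
            map_add' := fun x y => rfl
            map_smul' := fun c x => rfl
            left_inv := fun x => rfl
            right_inv := fun x => rfl }
  erw [hker] at h1
  simp only [dimk] at h1 ⊢
  exact h1.symm

end Dims


section SESL

lemma stablyZero_factor {M N : ModuleCat A} [Module.Finite A M] {f : M ⟶ N}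
    (hf : StablyZero f) :
    ∃ (n : ℕ) (b : ↥M →ₗ[A] (Fin n → A)) (a : (Fin n → A) →ₗ[A] ↥N),
      f.hom = a ∘ₗ b := by
  classical
  obtain ⟨P, hP, g, h, hfgh⟩ := hf
  haveI : Module.Projective A P := (IsProjective.iff_projective _).mpr hP
  obtain ⟨σ, hσ⟩ := Module.projective_def.mp ‹Module.Projective A ↥P›
  set τ : (↥P →₀ A) →ₗ[A] ↥P := Finsupp.linearCombination A id with hτ
  set u : ↥M →ₗ[A] (↥P →₀ A) := σ ∘ₗ g.hom with hu
  obtain ⟨gens, hgens⟩ := Module.finite_def.mp ‹Module.Finite A ↥M›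
  set S : Finset ↥P := gens.sup fun m => (u m).support with hS
  have hrange : ∀ x : ↥M, u x ∈ Finsupp.supported A A (↑S : Set ↥P) := by
    intro x
    have hx : x ∈ Submodule.span A (↑gens : Set ↥M) := by rw [hgens]; trivial
    induction hx using Submodule.span_induction with
    | mem y hy =>
      rw [Finsupp.mem_supported]
      intro t ht
      exact Finset.mem_coe.mpr (Finset.mem_sup.mpr ⟨y, hy, Finset.mem_coe.mp ht⟩)
    | zero => rw [map_zero]; exact Submodule.zero_mem _
    | add y z _ _ hy hz => rw [map_add]; exact Submodule.add_mem _ hy hz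
    | smul a y _ hy => rw [map_smul]; exact Submodule.smul_mem _ a hy
  set W := ↥(Finsupp.supported A A (↑S : Set ↥P)) with hW
  set E : W ≃ₗ[A] (Fin S.card → A) :=
    (Finsupp.supportedEquivFinsupp (↑S : Set ↥P)).trans
      ((Finsupp.linearEquivFunOnFinite A A (↑S : Set ↥P)).trans
        (LinearEquiv.funCongrLeft A A (S.equivFin.symm.trans
          ((Equiv.setCongr (by simp)) : (↑S : Set ↥P) ≃ (↑S : Set ↥P))))) with hE
  refine ⟨S.card, E.toLinearMap ∘ₗ (LinearMap.codRestrict _ u hrange),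
    h.hom ∘ₗ τ ∘ₗ (Finsupp.supported A A (↑S : Set ↥P)).subtype ∘ₗ
      E.symm.toLinearMap, ?_⟩
  apply LinearMap.ext
  intro x
  have h1 : f x = h (g x) := by rw [hfgh]; rfl
  have h2 : τ (σ (g x)) = g x := hσ (g x)
  simp only [LinearMap.comp_apply, LinearEquiv.coe_coe]
  rw [LinearEquiv.symm_apply_apply]
  show f x = h (τ (u x))
  rw [hu, LinearMap.comp_apply, h2, h1]

end SESL


section SIso

attribute [local instance] resModuleAG

lemma SES.finite_mid {X Y Z : ModuleCat A} (s : SES X Y Z)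
    [Module.Finite A X] [Module.Finite A Z] : Module.Finite A Y := by
  rw [Module.finite_def]
  apply Submodule.fg_of_fg_map_of_fg_inf_ker s.p.hom
  · rw [Submodule.map_top, LinearMap.range_eq_top.mpr s.surj]
    exact Module.finite_def.mp ‹Module.Finite A ↥Z›
  · have hker : LinearMap.ker s.p.hom = LinearMap.range s.i.hom := by
      ext y
      rw [LinearMap.mem_ker, LinearMap.mem_range]
      exact s.exact y
    rw [top_inf_eq, hker, LinearMap.range_eq_map]
    exact Submodule.FG.map _ (Module.finite_def.mp ‹Module.Finite A ↥X›)

/-- The `A`-linear equivalence between `X` and the kernel of `p` in an SES. -/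
noncomputable def SES.kerEquiv {X Y Z : ModuleCat A} (s : SES X Y Z) :
    ↥X ≃ₗ[A] ↥(LinearMap.ker s.p.hom) := by
  apply LinearEquiv.ofBijective
    (LinearMap.codRestrict (LinearMap.ker s.p.hom) s.i.hom
      (fun x => (s.exact (s.i x)).mpr ⟨x, rfl⟩))
  constructor
  · intro x y hxy
    exact s.inj (congrArg Subtype.val hxy)
  · rintro ⟨y, hy⟩
    obtain ⟨x, hx⟩ := (s.exact y).mp hy
    exact ⟨x, Subtype.ext hx⟩

section kAlg

variable {k : Type} [Field k] [Algebra k A] [Module.Finite k A]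

lemma SES.dimk_eq {X Y Z : ModuleCat A} (s : SES X Y Z)
    [Module.Finite A X] [Module.Finite A Z] :
    dimk k A ↥Y = dimk k A ↥X + dimk k A ↥Z := by
  haveI := s.finite_mid
  have h := dimk_eq_of_surjective (k := k) s.p.hom s.surj
  rw [dimk_eq_of_equiv (k := k) s.kerEquiv]
  omega

lemma dimk_prod (M N : Type) [AddCommGroup M] [AddCommGroup N] [Module A M] [Module A N]
    [Module.Finite A M] [Module.Finite A N] :
    dimk k A (M × N) = dimk k A M + dimk k A N := by
  have e : RestrictScalars k A (M × N) ≃ₗ[k]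
      (RestrictScalars k A M × RestrictScalars k A N) :=
    { toFun := fun x => x
      invFun := fun x => x
      map_add' := fun x y => rfl
      map_smul' := fun c x => rfl
      left_inv := fun x => rfl
      right_inv := fun x => rfl }
  haveI := finiteDimensional_resk (k := k) (A := A) M
  haveI := finiteDimensional_resk (k := k) (A := A) N
  haveI : Module.Finite k (RestrictScalars k A M) := finiteDimensional_resk (k := k) (A := A) M
  haveI : Module.Finite k (RestrictScalars k A N) := finiteDimensional_resk (k := k) (A := A) N
  haveI : Module.Free k (RestrictScalars k A M) := Module.Free.of_divisionRing k _
  haveI : Module.Free k (RestrictScalars k A N) := Module.Free.of_divisionRing k _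
  rw [dimk, e.finrank_eq, Module.finrank_prod]
  rfl

lemma stablyIso_dimk_congr (q : ℕ) {M N : ModuleCat A}
    [Module.Finite A M] [Module.Finite A N] (hMN : StablyIso M N)
    (hdvd : ∀ (V : Type) [AddCommGroup V] [Module A V],
      Module.Finite A V → Module.Projective A V → q ∣ dimk k A V) :
    (dimk k A ↥M : ZMod q) = (dimk k A ↥N : ZMod q) := by
  classical
  obtain ⟨f, g, h1, h2⟩ := hMN
  obtain ⟨n1, β, α, hβα⟩ := stablyZero_factor h1
  obtain ⟨n2, δ, γ, hδγ⟩ := stablyZero_factor h2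
  have hgf : ∀ m : ↥M, g (f m) - m = α (β m) := fun m => DFunLike.congr_fun hβα m
  have hfg : ∀ x : ↥N, f (g x) - x = γ (δ x) := fun x => DFunLike.congr_fun hδγ x
  set W1 := (Fin n1 → A) with hW1
  set W2 := (Fin n2 → A) with hW2
  set s0 : ↥M →ₗ[A] (↥N × W1) := LinearMap.prod f.hom β with hs0
  set r0 : (↥N × W1) →ₗ[A] ↥M :=
    g.hom ∘ₗ (LinearMap.fst A ↥N W1) - α ∘ₗ (LinearMap.snd A ↥N W1) with hr0
  have hr0s0 : ∀ m, r0 (s0 m) = m := fun m => by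
    show g (f m) - α (β m) = m
    rw [← hgf m]
    abel
  have hr0surj : Function.Surjective r0 := fun m => ⟨s0 m, hr0s0 m⟩
  set T : (↥N × W1) →ₗ[A] (↥N × W1) := LinearMap.id - s0 ∘ₗ r0 with hT
  have hTker : ∀ z, r0 (T z) = 0 := fun z => by
    show r0 (z - s0 (r0 z)) = 0
    rw [map_sub, hr0s0]
    abel
  have hTfix : ∀ z ∈ LinearMap.ker r0, T z = z := fun z hz => by
    show z - s0 (r0 z) = z
    rw [LinearMap.mem_ker.mp hz, map_zero]
    abel
  set ρ : (↥N × W1) →ₗ[A] ↥(LinearMap.ker r0) :=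
    LinearMap.codRestrict _ T hTker with hρ
  set j := (LinearMap.ker r0).subtype with hj
  set b' : (↥N × W1) →ₗ[A] (W2 × (W1 × W1)) :=
    LinearMap.prod (δ ∘ₗ (LinearMap.fst A ↥N W1))
      (LinearMap.prod (β ∘ₗ g.hom ∘ₗ (LinearMap.fst A ↥N W1))
        (LinearMap.snd A ↥N W1)) with hb'
  set a' : (W2 × (W1 × W1)) →ₗ[A] (↥N × W1) :=
    LinearMap.prod
      (- ((γ : W2 →ₗ[A] ↥N) ∘ₗ (LinearMap.fst A W2 (W1 × W1))) +
        f.hom ∘ₗ α ∘ₗ (LinearMap.snd A W1 W1) ∘ₗ (LinearMap.snd A W2 (W1 × W1)))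
      ((LinearMap.snd A W1 W1) ∘ₗ (LinearMap.snd A W2 (W1 × W1)) -
        (LinearMap.fst A W1 W1) ∘ₗ (LinearMap.snd A W2 (W1 × W1)) +
        β ∘ₗ α ∘ₗ (LinearMap.snd A W1 W1) ∘ₗ (LinearMap.snd A W2 (W1 × W1))) with ha'
  have hab : ∀ z, a' (b' z) = T z := by
    rintro ⟨x, w⟩
    have e1 : γ (δ x) = f (g x) - x := (hfg x).symm
    refine Prod.ext ?_ ?_
    · show -(γ (δ x)) + f (α w) = x - f (g x - α w)
      rw [map_sub, e1]
      abel
    · show w - β (g x) + β (α w) = w - β (g x - α w)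
      rw [map_sub]
      abel
  haveI : Module.Finite A ↥(LinearMap.ker r0) :=
    Module.Finite.of_surjective ρ (fun z => ⟨j z, Subtype.ext (hTfix z.1 z.2)⟩)
  have hprojK : Module.Projective A ↥(LinearMap.ker r0) :=
    Module.Projective.of_split (b' ∘ₗ j) (ρ ∘ₗ a')
      (LinearMap.ext fun z => Subtype.ext (by
        show T (a' (b' z.1)) = z.1
        rw [hab, hTfix _ z.2, hTfix _ z.2]))
  have c1 : dimk k A (↥N × W1) = dimk k A ↥M + dimk k A ↥(LinearMap.ker r0) :=
    dimk_eq_of_surjective (k := k) r0 hr0surj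
  have c2 : dimk k A (↥N × W1) = dimk k A ↥N + dimk k A W1 := dimk_prod ↥N W1
  obtain ⟨d1, hd1⟩ := hdvd W1 inferInstance inferInstance
  obtain ⟨d2, hd2⟩ := hdvd ↥(LinearMap.ker r0) inferInstance hprojK
  have hEq : dimk k A ↥N + dimk k A W1 = dimk k A ↥M + dimk k A ↥(LinearMap.ker r0) := by
    rw [← c2, c1]
  have hcast : ((dimk k A ↥N + dimk k A W1 : ℕ) : ZMod q) =
      ((dimk k A ↥M + dimk k A ↥(LinearMap.ker r0) : ℕ) : ZMod q) := by rw [hEq]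
  push_cast at hcast
  rw [hd1, hd2] at hcast
  push_cast [ZMod.natCast_self] at hcast
  simpa using hcast.symm

end kAlg
end SIso


section TrivL

variable {k G : Type} [Field k] [Group G]

lemma triv_finite : Module.Finite (MonoidAlgebra k G) ↥(triv k G) := by
  set E := (Representation.trivial k (G := G) (V := k)).asModuleEquiv
  apply Module.Finite.of_surjective
    (LinearMap.toSpanSingleton (MonoidAlgebra k G) ↥(triv k G) (E.symm 1))
  intro y
  refine ⟨algebraMap k (MonoidAlgebra k G) (E y), ?_⟩
  show algebraMap k (MonoidAlgebra k G) (E y) • (E.symm 1) = y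
  rw [← Representation.asModuleEquiv_symm_map_smul]
  simp
  exact E.symm_apply_apply y

lemma dimk_triv : dimk k (MonoidAlgebra k G) ↥(triv k G) = 1 := by
  set E := (Representation.trivial k (G := G) (V := k)).asModuleEquiv
  have e : RestrictScalars k (MonoidAlgebra k G) ↥(triv k G) ≃ₗ[k] k :=
    { toFun := fun x => E x
      invFun := fun c => E.symm c
      map_add' := map_add E
      map_smul' := fun c x => by
        have h := Representation.asModuleEquiv_map_smul
          (Representation.trivial k (G := G) (V := k)) (algebraMap k (MonoidAlgebra k G) c) x
        rw [AlgHom.commutes, Module.algebraMap_end_apply] at h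
        exact h
      left_inv := fun x => E.symm_apply_apply x
      right_inv := fun c => E.apply_symm_apply c }
  rw [dimk, e.finrank_eq, Module.finrank_self]

lemma noetherian_ring_monoidAlgebra [Fintype G] : IsNoetherianRing (MonoidAlgebra k G) := by
  haveI : Module.Finite k (MonoidAlgebra k G) :=
    Module.Finite.of_basis (MonoidAlgebra.basis G k : Module.Basis G k (MonoidAlgebra k G))
  haveI : IsNoetherian k (MonoidAlgebra k G) :=
    isNoetherian_of_isNoetherianRing_of_finite k (MonoidAlgebra k G)
  exact isNoetherian_of_tower k inferInstance

lemma finite_ker [Fintype G] {M N : ModuleCat (MonoidAlgebra k G)}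
    [Module.Finite (MonoidAlgebra k G) M] (f : M ⟶ N) :
    Module.Finite (MonoidAlgebra k G) ↥(LinearMap.ker f.hom) := by
  haveI := noetherian_ring_monoidAlgebra (k := k) (G := G)
  haveI : IsNoetherian (MonoidAlgebra k G) ↥M :=
    isNoetherian_of_isNoetherianRing_of_finite (MonoidAlgebra k G) ↥M
  exact Module.Finite.iff_fg.mpr (IsNoetherian.noetherian _)

end TrivL

theorem Lzeta_dimension_obstruction
    (k G : Type) [Field k] [Group G] [Fintype G]
    (p : ℕ) [Fact p.Prime] [CharP k p]
    (P : Sylow p G) (hcyc : IsCyclic P) (q : ℕ) (hq : Nat.card P = q) (hq4 : 4 ≤ q)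
    (Ωk : ℤ → ModuleCat (MonoidAlgebra k G)) (hΩk : IsSyzygyFamily (triv k G) Ωk)
    (n : ℤ) (hn : Odd n)
    (ζ : Ωk n ⟶ triv k G) (hsurj : Function.Surjective ζ) (hζ : ¬ StablyZero ζ)
    (L : ModuleCat (MonoidAlgebra k G))
    (hL : L = ModuleCat.of (MonoidAlgebra k G) (LinearMap.ker ζ.hom)) :
    (¬ Module.finrank k (RestrictScalars k (MonoidAlgebra k G) L) ≡ 1 [MOD q] ∧
        ¬ Module.finrank k (RestrictScalars k (MonoidAlgebra k G) L) ≡ q - 1 [MOD q]) ∧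
      ∀ m : ℤ, ¬ StablyIso L (Ωk m) := by
  classical
  haveI hfinA : Module.Finite k (MonoidAlgebra k G) := finite_k_monoidAlgebra
  haveI hΩfin : ∀ i, Module.Finite (MonoidAlgebra k G) ↥(Ωk i) := hΩk.1
  -- the key divisibility fact
  have hdvd : ∀ (V : Type) [AddCommGroup V] [Module (MonoidAlgebra k G) V],
      Module.Finite (MonoidAlgebra k G) V → Module.Projective (MonoidAlgebra k G) V →
        q ∣ dimk k (MonoidAlgebra k G) V := by
    intro V _ _ hfin hproj
    rw [← hq]
    exact q_dvd_finrank P hcyc V hproj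
  -- q is at least 2, facts in ZMod q
  haveI : NeZero q := ⟨by omega⟩
  haveI : Fact (1 < q) := ⟨by omega⟩
  have hzq : ∀ a : ℕ, (a : ZMod q) = 0 → a ≠ 0 → 4 ≤ a := by
    intro a ha h0
    have := (ZMod.natCast_eq_zero_iff a q).mp ha
    have := Nat.le_of_dvd (Nat.pos_of_ne_zero h0) this
    omega
  have hone : (1 : ZMod q) ≠ 0 := by
    intro h
    have : ((1 : ℕ) : ZMod q) = 0 := by push_cast; exact h
    have := hzq 1 this (by omega)
    omega
  have hthree : ((3 : ℕ) : ZMod q) ≠ 0 := by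
    intro h
    have := hzq 3 h (by omega)
    omega
  -- the four needed inequalities
  have n01 : (0 : ZMod q) ≠ 1 := fun h => hone h.symm
  have n0m1 : (0 : ZMod q) ≠ -1 := fun h => hone (by linear_combination h)
  have nm21 : (-2 : ZMod q) ≠ 1 := fun h => hthree (by push_cast; linear_combination -h)
  have nm2m1 : (-2 : ZMod q) ≠ -1 := fun h => hone (by linear_combination -h)
  -- dimensions of the Ωk i  mod q
  have relSES : ∀ i : ℤ, (dimk k (MonoidAlgebra k G) ↥(Ωk (i+1)) : ZMod q) +
      (dimk k (MonoidAlgebra k G) ↥(Ωk i) : ZMod q) = 0 := by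
    intro i
    obtain ⟨Pr, hPr, ⟨s⟩⟩ := hΩk.2.2 i
    haveI := hΩfin (i+1)
    haveI := hΩfin i
    haveI hPfin : Module.Finite (MonoidAlgebra k G) ↥Pr := s.finite_mid
    have hd := s.dimk_eq (k := k)
    obtain ⟨c, hc⟩ := hdvd ↥Pr hPfin ((IsProjective.iff_projective _).mpr hPr)
    have hcast := congrArg (fun x : ℕ => (x : ZMod q)) hd
    simp only [Nat.cast_add] at hcast
    rw [hc] at hcast
    push_cast [ZMod.natCast_self] at hcast
    linear_combination -hcast
  have hD0 : (dimk k (MonoidAlgebra k G) ↥(Ωk 0) : ZMod q) = 1 := by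
    haveI : Module.Finite (MonoidAlgebra k G) ↥(triv k G) := triv_finite
    haveI := hΩfin 0
    have h := stablyIso_dimk_congr (k := k) q hΩk.2.1 hdvd
    rw [dimk_triv] at h
    simpa using h
  have hDpm : ∀ i : ℤ, (dimk k (MonoidAlgebra k G) ↥(Ωk i) : ZMod q) = 1 ∨
      (dimk k (MonoidAlgebra k G) ↥(Ωk i) : ZMod q) = -1 := by
    intro i
    induction i using Int.induction_on with
    | zero => exact Or.inl hD0
    | succ m ih =>
      have h := relSES m
      rcases ih with h' | h'
      · right; rw [h'] at h; linear_combination h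
      · left; rw [h'] at h; linear_combination h
    | pred m ih =>
      have h := relSES (-(m:ℤ) - 1)
      rw [show (-(m:ℤ) - 1) + 1 = -(m:ℤ) by ring] at h
      rcases ih with h' | h'
      · right; rw [h'] at h; linear_combination h
      · left; rw [h'] at h; linear_combination h
  -- dimension of L
  subst hL
  haveI hLfin : Module.Finite (MonoidAlgebra k G) ↥(LinearMap.ker ζ.hom) := by
    haveI := hΩfin n
    exact finite_ker ζ
  haveI := hΩfin n
  have hdim : dimk k (MonoidAlgebra k G) ↥(Ωk n) =
      dimk k (MonoidAlgebra k G) ↥(triv k G) +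
        dimk k (MonoidAlgebra k G) ↥(LinearMap.ker ζ.hom) :=
    dimk_eq_of_surjective (k := k) ζ.hom hsurj
  rw [dimk_triv] at hdim
  set dL : ℕ := dimk k (MonoidAlgebra k G) ↥(LinearMap.ker ζ.hom) with hdL
  have hgoal_dim : Module.finrank k (RestrictScalars k (MonoidAlgebra k G)
      ↥(ModuleCat.of (MonoidAlgebra k G) (LinearMap.ker ζ.hom))) = dL := rfl
  have hLcases : (dL : ZMod q) = 0 ∨ (dL : ZMod q) = -2 := by
    have hcast := congrArg (fun x : ℕ => (x : ZMod q)) hdim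
    simp only [Nat.cast_add, Nat.cast_one] at hcast
    rcases hDpm n with h' | h'
    · left; rw [h'] at hcast; linear_combination -hcast
    · right; rw [h'] at hcast; linear_combination -hcast
  have hqm1 : (((q - 1 : ℕ)) : ZMod q) = -1 := by
    have h1 : ((q - 1 : ℕ) : ZMod q) + ((1 : ℕ) : ZMod q) = ((q : ℕ) : ZMod q) := by
      rw [← Nat.cast_add]
      congr 1
      omega
    rw [ZMod.natCast_self] at h1
    push_cast at h1
    linear_combination h1
  refine ⟨⟨?_, ?_⟩, ?_⟩
  · intro hcon
    have h := (ZMod.natCast_eq_natCast_iff _ _ _).mpr hcon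
    rw [hgoal_dim] at h
    push_cast at h
    rcases hLcases with h' | h' <;> rw [h'] at h
    · exact n01 h
    · exact nm21 h
  · intro hcon
    have h := (ZMod.natCast_eq_natCast_iff _ _ _).mpr hcon
    rw [hgoal_dim] at h
    rw [hqm1] at h
    rcases hLcases with h' | h' <;> rw [h'] at h
    · exact n0m1 h
    · exact nm2m1 h
  · intro m hiso
    haveI := hΩfin m
    haveI : Module.Finite (MonoidAlgebra k G)
        ↥(ModuleCat.of (MonoidAlgebra k G) (LinearMap.ker ζ.hom)) := hLfin
    have h := stablyIso_dimk_congr (k := k) q hiso hdvd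
    have hL' : dimk k (MonoidAlgebra k G)
        ↥(ModuleCat.of (MonoidAlgebra k G) (LinearMap.ker ζ.hom)) = dL := rfl
    rw [hL'] at h
    rcases hLcases with h' | h' <;> rw [h'] at h <;> rcases hDpm m with h'' | h'' <;>
      rw [h''] at h
    · exact n01 h
    · exact n0m1 h
    · exact nm21 h
    · exact nm2m1 h

end StmodGH
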